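/- Let φ : (0,∞) → (0,∞) be given by φ(x) = log Φ̃(x) where Φ̃(x) = Φ((x+M)⁴)·e^{−√(log(x+2))} with Φ : [0,∞) → (0,1] a decreasing differentiable log-convex bijection and M ≥ 2. Then −(d/dx) log Φ̃(x) ≥ 1/(2(x+2)√(log(x+2))) for all x ≥ 0. -/

import Mathlib

open Real Filter Topology

/-- If `f` is strictly antitone on `Set.Ici 0` and has a derivative at an interior
point `y > 0`, then `deriv f y ≤ 0`. -/
lemma deriv_nonpos_of_strictAntiOn {f : ℝ → ℝ} (hanti : StrictAntiOn f (Set.Ici 0))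
    {y : ℝ} (hy : 0 < y) (hf : HasDerivAt f (deriv f y) y) : deriv f y ≤ 0 := by
  have htends : Tendsto (slope f y) (𝓝[>] y) (𝓝 (deriv f y)) :=
    (hasDerivAt_iff_tendsto_slope.mp hf).mono_left
      (nhdsWithin_mono y (by intro z hz; exact ne_of_gt hz))
  refine le_of_tendsto htends ?_
  filter_upwards [self_mem_nhdsWithin] with z hz
  have hzy : y < z := hz
  have hΦ : f z < f y := hanti (le_of_lt hy) (le_of_lt (hy.trans hzy)) hzy
  rw [slope_def_field]
  exact div_nonpos_of_nonpos_of_nonneg (by linarith) (by linarith)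

/-- With `Φ : [0,∞) → (0,1]` a decreasing differentiable bijection, log-convex on
`[M,∞)` with `M ≥ 2`, and `Φ̃(x) = Φ((x+M)⁴)·e^{-√(log(x+2))}`, one has
`-(d/dx) log Φ̃(x) ≥ 1/(2(x+2)√(log(x+2)))` for all `x ≥ 0`. -/
theorem stmt17 (Φ : ℝ → ℝ) (M : ℝ) (hM : 2 ≤ M)
    (hanti : StrictAntiOn Φ (Set.Ici 0))
    (hdiff : DifferentiableOn ℝ Φ (Set.Ici 0))
    (hbij : Set.BijOn Φ (Set.Ici 0) (Set.Ioc 0 1))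
    (hlogconvex : ConvexOn ℝ (Set.Ici M) (fun x => Real.log (Φ x)))
    (x : ℝ) (hx : 0 ≤ x) :
    1 / (2 * (x + 2) * Real.sqrt (Real.log (x + 2))) ≤
      -deriv (fun t => Real.log
        (Φ ((t + M) ^ 4) * Real.exp (-Real.sqrt (Real.log (t + 2))))) x := by
  -- positivity facts
  have hΦpos : ∀ t : ℝ, 0 < Φ ((t + M) ^ 4) := fun t =>
    (hbij.mapsTo (by positivity : (0:ℝ) ≤ (t + M) ^ 4)).1
  have hL : 0 < Real.log (x + 2) := Real.log_pos (by linarith)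
  have hsL : 0 < Real.sqrt (Real.log (x + 2)) := Real.sqrt_pos.mpr hL
  -- rewrite the function as a sum
  have hfun : (fun t => Real.log
      (Φ ((t + M) ^ 4) * Real.exp (-Real.sqrt (Real.log (t + 2)))))
      = (fun t => Real.log (Φ ((t + M) ^ 4)) + -Real.sqrt (Real.log (t + 2))) := by
    funext t
    rw [Real.log_mul (ne_of_gt (hΦpos t)) (Real.exp_ne_zero _), Real.log_exp]
  rw [hfun]
  -- derivative of the second summand
  have hder2 : HasDerivAt (fun t : ℝ => Real.sqrt (Real.log (t + 2)))
      (1 / (2 * Real.sqrt (Real.log (x + 2))) * ((x + 2)⁻¹ * 1)) x := by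
    have h1 : HasDerivAt (fun t : ℝ => t + 2) 1 x := (hasDerivAt_id x).add_const 2
    have h2 : HasDerivAt (fun t : ℝ => Real.log (t + 2)) ((x + 2)⁻¹ * 1) x :=
      (Real.hasDerivAt_log (by linarith)).comp x h1
    exact (Real.hasDerivAt_sqrt (ne_of_gt hL)).comp x h2
  -- derivative of the first summand
  set y : ℝ := (x + M) ^ 4 with hy
  have hy0 : 0 < y := by positivity
  have hΦdiff : DifferentiableAt ℝ Φ y :=
    hdiff.differentiableAt (Ici_mem_nhds hy0)
  have hpoly : HasDerivAt (fun t : ℝ => (t + M) ^ 4) (4 * (x + M) ^ 3) x := by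
    have h1 : HasDerivAt (fun t : ℝ => t + M) 1 x := (hasDerivAt_id x).add_const M
    have := (h1.fun_pow 4)
    simpa using this
  have hcomp : HasDerivAt (fun t : ℝ => Φ ((t + M) ^ 4))
      (deriv Φ y * (4 * (x + M) ^ 3)) x :=
    (hΦdiff.hasDerivAt).comp x hpoly
  have hder1 : HasDerivAt (fun t : ℝ => Real.log (Φ ((t + M) ^ 4)))
      ((Φ y)⁻¹ * (deriv Φ y * (4 * (x + M) ^ 3))) x :=
    by have := (Real.hasDerivAt_log (ne_of_gt (hΦpos x))).comp x hcomp; exact this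
  -- the total derivative
  have htotal : HasDerivAt
      (fun t => Real.log (Φ ((t + M) ^ 4)) + -Real.sqrt (Real.log (t + 2)))
      ((Φ y)⁻¹ * (deriv Φ y * (4 * (x + M) ^ 3)) +
        -(1 / (2 * Real.sqrt (Real.log (x + 2))) * ((x + 2)⁻¹ * 1))) x :=
    hder1.add hder2.neg
  rw [htotal.deriv]
  -- sign of deriv Φ y
  have hΦ' : deriv Φ y ≤ 0 :=
    deriv_nonpos_of_strictAntiOn hanti hy0 hΦdiff.hasDerivAt
  have h1 : (Φ y)⁻¹ * (deriv Φ y * (4 * (x + M) ^ 3)) ≤ 0 := by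
    apply mul_nonpos_of_nonneg_of_nonpos (le_of_lt (inv_pos.mpr (hΦpos x)))
    apply mul_nonpos_of_nonpos_of_nonneg hΦ' (by positivity)
  have h2 : 1 / (2 * Real.sqrt (Real.log (x + 2))) * ((x + 2)⁻¹ * 1)
      = 1 / (2 * (x + 2) * Real.sqrt (Real.log (x + 2))) := by
    field_simp
  rw [neg_add, neg_neg, h2]
  linarith
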